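/- For all real numbers a > 0, b > 0 and 1 < r < 2, one has a^r + r·a^{r−1}·b + b^r ≤ k̂(r)·(a + b)^r, where k̂(r) = (1 + r·(r−1)^{1/(r−2)} + (r−1)^{r/(r−2)}) / (1 + (r−1)^{1/(r−2)})^r. -/

import Mathlib

open Set MeasureTheory Filter

/-- The conjugate exponent `p' = p/(p-1)`. -/
noncomputable def pconj (p : ℝ) : ℝ := p / (p - 1)

/-- The constant `k(p)` from the paper. -/
noncomputable def kfun (p : ℝ) : ℝ :=
  if p < 2 then 1 / (2 ^ (pconj p - 1) - 1)
  else if p = 2 then 1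
  else pconj p / (pconj p - 1 +
    (1 + pconj p * (pconj p - 1) ^ ((1 : ℝ) / (pconj p - 2)) +
      (pconj p - 1) ^ (pconj p / (pconj p - 2))) /
    (1 + (pconj p - 1) ^ ((1 : ℝ) / (pconj p - 2))) ^ pconj p)

/-- Standing assumptions on the data `p, θ, D, H, h, g` (combustion setting). -/
structure CombSetup (p θ : ℝ) (D H h g : ℝ → ℝ) : Prop where
  hp : 1 < p
  hθ0 : 0 < θ
  hθ1 : θ < 1
  hD : ContDiffOn ℝ 1 D (Ioo 0 1)
  hDpos : ∀ v ∈ Ioo (0 : ℝ) 1, 0 < D v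
  hH : ContDiffOn ℝ 1 H (Icc 0 1)
  hH0 : H 0 = 0
  hh : ContinuousOn h (Icc 0 1)
  hHd : ∀ v ∈ Icc (0 : ℝ) 1, HasDerivWithinAt H (h v) (Icc 0 1) v
  hgc : ContinuousOn g (Icc 0 1)
  hg0 : ∀ v ∈ Icc (0 : ℝ) θ, g v = 0
  hgpos : ∀ v ∈ Ioo θ 1, 0 < g v
  hg1 : g 1 = 0
  hInt : IntegrableOn (fun v => D v ^ (pconj p - 1) * g v) (Ioo 0 1)

/-- The diffusive flux `ξ ↦ D(u(ξ)) |u'(ξ)|^{p-2} u'(ξ)`. -/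
noncomputable def flux (p : ℝ) (D u : ℝ → ℝ) : ℝ → ℝ :=
  fun ξ => D (u ξ) * (|deriv u ξ| ^ (p - 2) * deriv u ξ)

/-- Solution of the traveling-wave problem with speed `c`. -/
structure IsTWSol (p c : ℝ) (D h g : ℝ → ℝ) (u : ℝ → ℝ) : Prop where
  cont : Continuous u
  mem : ∀ ξ, u ξ ∈ Icc (0 : ℝ) 1
  smooth : ContDiffOn ℝ 1 u {ξ | u ξ ∈ Ioo (0 : ℝ) 1}
  eqn : ∀ ξ ∈ {ξ | u ξ ∈ Ioo (0 : ℝ) 1},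
    HasDerivAt (flux p D u) (-(c + h (u ξ)) * deriv u ξ - g (u ξ)) ξ
  flux_cont : Continuous (fun ξ => if u ξ ∈ Ioo (0 : ℝ) 1 then flux p D u ξ else 0)
  flux_to0 : ∀ ε > 0, ∃ δ > 0, ∀ ξ, u ξ ∈ Ioo (0 : ℝ) 1 → u ξ < δ → |flux p D u ξ| < ε
  flux_to1 : ∀ ε > 0, ∃ δ > 0, ∀ ξ, u ξ ∈ Ioo (0 : ℝ) 1 → 1 - δ < u ξ → |flux p D u ξ| < ε
  lim_bot : Tendsto u atBot (nhds 1)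
  lim_top : Tendsto u atTop (nhds 0)

/-- Positive solution of the first-order problem with parameter `c`. -/
structure IsFOSol (p c : ℝ) (D h g : ℝ → ℝ) (y : ℝ → ℝ) : Prop where
  cont : ContinuousOn y (Icc 0 1)
  eqn : ∀ v ∈ Ioo (0 : ℝ) 1, HasDerivAt y
    (pconj p * ((c + h v) * (max (y v) 0) ^ (1 / p) - D v ^ (pconj p - 1) * g v)) v
  y0 : y 0 = 0
  y1 : y 1 = 0
  pos : ∀ v ∈ Ioo (0 : ℝ) 1, 0 < y v

/-- The constant `k̂(r)` from the technical lemma. -/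
noncomputable def khat (r : ℝ) : ℝ :=
  (1 + r * (r - 1) ^ ((1 : ℝ) / (r - 2)) + (r - 1) ^ (r / (r - 2))) /
    (1 + (r - 1) ^ ((1 : ℝ) / (r - 2))) ^ r

lemma khat_key (r : ℝ) (hr1 : 1 < r) (hr2 : r < 2) {t : ℝ} (ht : 0 < t) :
    1 + r * t + t ^ r ≤ khat r * (1 + t) ^ r := by
  have hr1' : (0 : ℝ) < r - 1 := by linarith
  have hr2' : r - 2 < 0 := by linarith
  have hr2ne : r - 2 ≠ 0 := ne_of_lt hr2'
  set ts : ℝ := (r - 1) ^ ((1 : ℝ) / (r - 2)) with hts_def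
  have hts : 0 < ts := Real.rpow_pos_of_pos hr1' _
  set h : ℝ → ℝ := fun x => (1 + r * x + x ^ r) / (1 + x) ^ r with hh_def
  -- khat r = h ts
  have hts_r : ts ^ r = (r - 1) ^ (r / (r - 2)) := by
    rw [hts_def, ← Real.rpow_mul (le_of_lt hr1')]
    congr 1
    field_simp
  have hkhat : khat r = h ts := by
    rw [hh_def]
    simp only [khat, hts_r]
    rfl
  -- ts ^ (r-2) = r - 1
  have hts_pow : ts ^ (r - 2) = r - 1 := by
    rw [hts_def, ← Real.rpow_mul (le_of_lt hr1')]
    rw [one_div_mul_cancel hr2ne, Real.rpow_one]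
  -- the derivative
  set Dv : ℝ → ℝ := fun x => ((r + r * x ^ (r - 1)) * (1 + x) ^ r -
      (1 + r * x + x ^ r) * (r * (1 + x) ^ (r - 1))) / ((1 + x) ^ r) ^ 2 with hDv_def
  have hD : ∀ x : ℝ, 0 < x → HasDerivAt h (Dv x) x := by
    intro x hx
    have hx1 : (0:ℝ) < 1 + x := by linarith
    have hu : HasDerivAt (fun y : ℝ => 1 + r * y + y ^ r) (r + r * x ^ (r - 1)) x := by
      have h1 : HasDerivAt (fun y : ℝ => y ^ r) (r * x ^ (r - 1)) x :=
        Real.hasDerivAt_rpow_const (Or.inl (ne_of_gt hx))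
      have h2 : HasDerivAt (fun y : ℝ => 1 + r * y) r x := by
        simpa using ((hasDerivAt_id x).const_mul r).const_add 1
      exact h2.add h1
    have hv : HasDerivAt (fun y : ℝ => (1 + y) ^ r) (r * (1 + x) ^ (r - 1)) x := by
      have hinner : HasDerivAt (fun y : ℝ => 1 + y) 1 x := by
        simpa using (hasDerivAt_id x).const_add 1
      have houter : HasDerivAt (fun y : ℝ => y ^ r) (r * (1 + x) ^ (r - 1)) (1 + x) :=
        Real.hasDerivAt_rpow_const (Or.inl (ne_of_gt hx1))
      have hc := houter.comp x hinner
      rw [mul_one] at hc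
      exact hc
    have hvne : (1 + x) ^ r ≠ 0 := ne_of_gt (Real.rpow_pos_of_pos hx1 r)
    exact hu.div hv hvne
  -- sign of Dv
  have hDv_eq : ∀ x : ℝ, 0 < x →
      Dv x = r * (1 + x) ^ (r - 1) * (x * (x ^ (r - 2) - (r - 1))) / ((1 + x) ^ r) ^ 2 := by
    intro x hx
    have hx1 : (0:ℝ) < 1 + x := by linarith
    have e1 : (1 + x) ^ r = (1 + x) ^ (r - 1) * (1 + x) := by
      rw [← Real.rpow_add_one (ne_of_gt hx1)]; congr 1; ring
    have e2 : x ^ r = x ^ (r - 1) * x := by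
      rw [← Real.rpow_add_one (ne_of_gt hx)]; congr 1; ring
    have e3 : x ^ (r - 1) = x ^ (r - 2) * x := by
      rw [← Real.rpow_add_one (ne_of_gt hx)]; congr 1; ring
    rw [hDv_def]
    simp only
    rw [e1, e2, e3]
    ring
  have hDpos : ∀ x : ℝ, 0 < x → x < ts → 0 < Dv x := by
    intro x hx hxts
    have hx1 : (0:ℝ) < 1 + x := by linarith
    have hC : r - 1 < x ^ (r - 2) := by
      have := Real.rpow_lt_rpow_of_neg hx hxts hr2'
      rwa [hts_pow] at this
    rw [hDv_eq x hx]
    apply div_pos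
    · apply mul_pos (mul_pos (by linarith) (Real.rpow_pos_of_pos hx1 _))
      exact mul_pos hx (by linarith)
    · positivity
  have hDneg : ∀ x : ℝ, ts < x → Dv x < 0 := by
    intro x hxts
    have hx : 0 < x := lt_trans hts hxts
    have hx1 : (0:ℝ) < 1 + x := by linarith
    have hC : x ^ (r - 2) < r - 1 := by
      have := Real.rpow_lt_rpow_of_neg hts hxts hr2'
      rwa [hts_pow] at this
    rw [hDv_eq x hx]
    apply div_neg_of_neg_of_pos
    · apply mul_neg_of_pos_of_neg (mul_pos (by linarith) (Real.rpow_pos_of_pos hx1 _))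
      exact mul_neg_of_pos_of_neg hx (by linarith)
    · positivity
  -- h t ≤ h ts
  have hmain : h t ≤ h ts := by
    rcases lt_trichotomy t ts with hc | hc | hc
    · have hmono : StrictMonoOn h (Icc t ts) := by
        apply strictMonoOn_of_deriv_pos (convex_Icc t ts)
        · intro x hx
          exact (hD x (lt_of_lt_of_le ht hx.1)).continuousAt.continuousWithinAt
        · intro x hx
          rw [interior_Icc] at hx
          rw [(hD x (lt_trans ht hx.1)).deriv]
          exact hDpos x (lt_trans ht hx.1) hx.2
      exact le_of_lt (hmono (left_mem_Icc.2 (le_of_lt hc)) (right_mem_Icc.2 (le_of_lt hc)) hc)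
    · rw [hc]
    · have hanti : StrictAntiOn h (Icc ts t) := by
        apply strictAntiOn_of_deriv_neg (convex_Icc ts t)
        · intro x hx
          exact (hD x (lt_of_lt_of_le hts hx.1)).continuousAt.continuousWithinAt
        · intro x hx
          rw [interior_Icc] at hx
          rw [(hD x (lt_trans hts hx.1)).deriv]
          exact hDneg x hx.1
      exact le_of_lt (hanti (left_mem_Icc.2 (le_of_lt hc)) (right_mem_Icc.2 (le_of_lt hc)) hc)
  rw [hkhat] at *
  have hpos : (0:ℝ) < (1 + t) ^ r := Real.rpow_pos_of_pos (by linarith) r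
  rw [hh_def] at hmain
  simp only at hmain
  calc 1 + r * t + t ^ r = (1 + r * t + t ^ r) / (1 + t) ^ r * (1 + t) ^ r := by
        field_simp
    _ ≤ h ts * (1 + t) ^ r := by
        apply mul_le_mul_of_nonneg_right hmain (le_of_lt hpos)

/-- Technical inequality, `1 < r < 2`.
For `a, b > 0` and `1 < r < 2`: `a^r + r a^{r-1} b + b^r ≤ k̂(r) (a+b)^r`. -/
theorem stmt12 (a b r : ℝ) (ha : 0 < a) (hb : 0 < b) (hr1 : 1 < r) (hr2 : r < 2) :
    a ^ r + r * a ^ (r - 1) * b + b ^ r ≤ khat r * (a + b) ^ r := by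
  set t : ℝ := b / a with ht_def
  have ht : 0 < t := div_pos hb ha
  have hbt : b = a * t := by rw [ht_def]; field_simp
  have har : (0:ℝ) < a ^ r := Real.rpow_pos_of_pos ha r
  have e1 : a ^ (r - 1) * b = a ^ r * t := by
    rw [hbt, ← mul_assoc, ← Real.rpow_add_one (ne_of_gt ha)]
    congr 2; ring
  have e2 : b ^ r = a ^ r * t ^ r := by
    rw [hbt, Real.mul_rpow (le_of_lt ha) (le_of_lt ht)]
  have e3 : (a + b) ^ r = a ^ r * (1 + t) ^ r := by
    rw [show a + b = a * (1 + t) by rw [hbt]; ring,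
      Real.mul_rpow (le_of_lt ha) (by linarith)]
  have h := khat_key r hr1 hr2 ht
  calc a ^ r + r * a ^ (r - 1) * b + b ^ r
      = a ^ r * (1 + r * t + t ^ r) := by
        rw [e2, show r * a ^ (r-1) * b = r * (a ^ (r-1) * b) by ring, e1]; ring
    _ ≤ a ^ r * (khat r * (1 + t) ^ r) := mul_le_mul_of_nonneg_left h (le_of_lt har)
    _ = khat r * (a + b) ^ r := by rw [e3]; ring
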